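/- Let u_1,...,u_n, v_1,...,v_n be pairwise anticommuting odd variables in an exterior algebra over a commutative integral domain, with n ≥ 2. Then perm(f_0 + f_1 t u_i v_j)_{i,j=1}^n = n! f_0^n + (n−1)! f_0^{n−1} f_1 t (u_1 + ... + u_n)(v_1 + ... + v_n). -/

import Mathlib

open Polynomial List

private lemma list_sum_comm {ι β M : Type*} [AddCommMonoid M] (s : Finset β) (L : List ι)
    (f : β → ι → M) :
    ∑ b ∈ s, (L.map (f b)).sum = (L.map (fun i => ∑ b ∈ s, f b i)).sum := by
  induction L with
  | nil => simp
  | cons k L ih => simp [Finset.sum_add_distrib, ih]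

private lemma expand_lemma {S ι : Type*} [Ring S] (a : S) (g : ι → S)
    (ha : ∀ i, Commute a (g i)) (l : List ι) :
    ((l.map fun i => a + g i).prod) =
      (l.sublists'.map (fun s => a ^ (l.length - s.length) * (s.map g).prod)).sum := by
  induction l with
  | nil => simp
  | cons k l ih =>
    rw [List.map_cons, List.prod_cons, ih, List.sublists'_cons, List.map_append,
      List.sum_append, List.map_map, add_mul, ← List.sum_map_mul_left, ← List.sum_map_mul_left]
    congr 1
    · refine congrArg _ (List.map_congr_left fun s hs => ?_)
      have hle : s.length ≤ l.length := (List.mem_sublists'.mp hs).length_le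
      show a * (a ^ (l.length - s.length) * (s.map g).prod) = _
      rw [← mul_assoc, ← pow_succ', List.length_cons, Nat.succ_sub hle]
    · refine congrArg _ (List.map_congr_left fun s hs => ?_)
      show g k * (a ^ (l.length - s.length) * (s.map g).prod)
        = a ^ ((k :: l).length - (k :: s).length) * ((k :: s).map g).prod
      rw [List.length_cons, List.length_cons, Nat.succ_sub_succ, List.map_cons, List.prod_cons,
        ← mul_assoc, ← ((ha k).pow_left (l.length - s.length)).eq, mul_assoc]

private lemma keyB {Λ : Type*} [Ring Λ] (ui uj va vb : Λ)
    (h1 : va * uj = -(uj * va)) (h2 : vb * uj = -(uj * vb)) (h3 : vb * va = -(va * vb)) :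
    ui * va * (uj * vb) + ui * vb * (uj * va) = 0 := by
  have e1 : ui * va * (uj * vb) = -(ui * uj * (va * vb)) := by
    rw [mul_assoc ui va, ← mul_assoc va uj, h1]; noncomm_ring
  have e2 : ui * vb * (uj * va) = ui * uj * (va * vb) := by
    rw [mul_assoc ui vb, ← mul_assoc vb uj, h2, neg_mul, mul_assoc uj vb va, h3]; noncomm_ring
  rw [e1, e2, neg_add_cancel]

private lemma sum_perm_apply {M : Type*} [AddCommMonoid M] (m : ℕ) (w : Fin (m+1) → M)
    (i : Fin (m+1)) :
    ∑ σ : Equiv.Perm (Fin (m+1)), w (σ i) = m.factorial • ∑ j, w j := by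
  have h0 : ∑ σ : Equiv.Perm (Fin (m+1)), w (σ i)
      = ∑ σ : Equiv.Perm (Fin (m+1)), w (σ 0) := by
    refine (Fintype.sum_equiv (Equiv.mulRight (Equiv.swap i 0)) _ _ (fun σ => ?_)).symm
    simp [Equiv.Perm.mul_apply]
  rw [h0, ← Fintype.sum_equiv (Equiv.Perm.decomposeFin (n := m)).symm
      (fun x => w (x.1)) (fun σ => w (σ 0)) (fun x => by obtain ⟨p, e⟩ := x; simp)]
  rw [Fintype.sum_prod_type]
  simp [Finset.sum_const, Fintype.card_perm, Finset.smul_sum]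

private lemma vanish {S : Type*} [Ring S] {n : ℕ} (F : Fin n → Fin n → S)
    (hkey : ∀ i j a b, F i a * F j b + F i b * F j a = 0)
    (i j : Fin n) (rest : List (Fin n)) (hij : i ≠ j)
    (hrest : ∀ k ∈ rest, k ≠ i ∧ k ≠ j) :
    ∑ σ : Equiv.Perm (Fin n), ((i::j::rest).map (fun k => F k (σ k))).prod = 0 := by
  refine Finset.sum_ninvolution (fun σ => σ * Equiv.swap i j) (fun σ => ?_) (fun σ _ => ?_)
    (fun σ => Finset.mem_univ _) (fun σ => ?_)
  · have hP : (rest.map (fun k => F k ((σ * Equiv.swap i j) k))).prod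
        = (rest.map (fun k => F k (σ k))).prod := by
      refine congrArg _ (List.map_congr_left fun k hk => ?_)
      rw [Equiv.Perm.mul_apply, Equiv.swap_apply_of_ne_of_ne (hrest k hk).1 (hrest k hk).2]
    simp only [List.map_cons, List.prod_cons]
    rw [hP, Equiv.Perm.mul_apply, Equiv.Perm.mul_apply, Equiv.swap_apply_left,
      Equiv.swap_apply_right, ← mul_assoc, ← mul_assoc, ← add_mul,
      hkey i j (σ i) (σ j), zero_mul]
  · intro heq
    apply hij
    have heq' : σ * Equiv.swap i j = σ := heq
    have h2 : (σ * Equiv.swap i j) i = σ i := by rw [heq']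
    rw [Equiv.Perm.mul_apply, Equiv.swap_apply_left] at h2
    exact (σ.injective h2).symm
  · show σ * Equiv.swap i j * Equiv.swap i j = σ
    rw [mul_assoc, Equiv.swap_mul_self, mul_one]

private lemma sum_map_single {β M : Type*} [AddCommMonoid M] :
    ∀ (L : List β) (f : β → M) (x : β), L.Nodup → x ∈ L →
      (∀ y ∈ L, y ≠ x → f y = 0) → (L.map f).sum = f x := by
  intro L
  induction L with
  | nil => intro f x _ hx; simp at hx
  | cons b L ih =>
    intro f x hnd hx h0
    simp only [List.map_cons, List.sum_cons]
    rcases List.mem_cons.mp hx with rfl | hx'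
    · have hz : (L.map f).sum = 0 := by
        refine List.sum_eq_zero fun z hz => ?_
        obtain ⟨y, hy, rfl⟩ := List.mem_map.mp hz
        exact h0 y (List.mem_cons_of_mem _ hy)
          (by rintro rfl; exact (List.nodup_cons.mp hnd).1 hy)
      rw [hz, add_zero]
    · rw [h0 b List.mem_cons_self
        (by rintro rfl; exact (List.nodup_cons.mp hnd).1 hx'), zero_add,
        ih f x (List.nodup_cons.mp hnd).2 hx'
          (fun y hy hyx => h0 y (List.mem_cons_of_mem _ hy) hyx)]

private lemma sum_sublists' {β M : Type*} [AddCommMonoid M] :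
    ∀ (l : List β) (c : List β → M), l.Nodup →
      (∀ s : List β, s.Sublist l → 2 ≤ s.length → c s = 0) →
      (l.sublists'.map c).sum = c [] + (l.map (fun i => c [i])).sum := by
  intro l
  induction l with
  | nil => intro c _ _; simp
  | cons k l ih =>
    intro c hnd hc
    rw [List.sublists'_cons, List.map_append, List.sum_append, List.map_map,
      ih c (List.nodup_cons.mp hnd).2
        (fun s hs h2 => hc s (hs.trans (List.sublist_cons_self k l)) h2)]
    have h1 : ((l.sublists'.map fun s => c (k :: s))).sum = c [k] := by
      refine sum_map_single l.sublists' (fun s => c (k :: s)) []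
        (List.nodup_sublists'.mpr (List.nodup_cons.mp hnd).2)
        (List.mem_sublists'.mpr (List.nil_sublist l)) (fun y hy hne => ?_)
      refine hc (k :: y) (List.cons_sublist_cons.mpr (List.mem_sublists'.mp hy)) ?_
      rcases y with _ | ⟨z, y⟩
      · exact absurd rfl hne
      · simp
    simp only [Function.comp_def]
    rw [h1, List.map_cons, List.sum_cons]
    abel

private lemma C_alg_commute' {R Λ : Type*} [CommSemiring R] [Ring Λ] [Algebra R Λ] (r : R)
    (p : Polynomial Λ) : Commute (Polynomial.C (algebraMap R Λ r)) p := by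
  induction p using Polynomial.induction_on' with
  | add p q hp hq => exact hp.add_right hq
  | monomial m b =>
    rw [← C_mul_X_pow_eq_monomial]
    have hc : Commute (algebraMap R Λ r) b := Algebra.commutes r b
    exact (hc.map (C : Λ →+* Polynomial Λ)).mul_right
      (((Polynomial.commute_X (C (algebraMap R Λ r))).symm).pow_right m)

/-- Fermionic permanent identity: for pairwise anticommuting odd variables
`u_1,…,u_n, v_1,…,v_n` (squaring to zero) over an integral domain,
`perm (f_0 + f_1 t u_i v_j) = n! f_0^n + (n-1)! f_0^{n-1} f_1 t (u_1+⋯+u_n)(v_1+⋯+v_n)`. -/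
theorem stmt7 (R : Type*) [CommRing R] [IsDomain R]
    (Λ : Type*) [Ring Λ] [Algebra R Λ] (n : ℕ) (hn : 2 ≤ n)
    (u v : Fin n → Λ)
    (hu : ∀ i j, u i * u j = -(u j * u i)) (hu2 : ∀ i, u i * u i = 0)
    (hv : ∀ i j, v i * v j = -(v j * v i)) (hv2 : ∀ i, v i * v i = 0)
    (huv : ∀ i j, u i * v j = -(v j * u i)) (f0 f1 : R) :
    (∑ σ : Equiv.Perm (Fin n),
      ((List.finRange n).map (fun i =>
        Polynomial.C (algebraMap R Λ f0) +
        Polynomial.C (algebraMap R Λ f1) * Polynomial.X *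
          Polynomial.C (u i) * Polynomial.C (v (σ i)))).prod) =
    (n.factorial : Polynomial Λ) * Polynomial.C (algebraMap R Λ (f0 ^ n)) +
    ((n - 1).factorial : Polynomial Λ) *
      Polynomial.C (algebraMap R Λ (f0 ^ (n - 1) * f1)) * Polynomial.X *
      Polynomial.C (∑ i : Fin n, u i) * Polynomial.C (∑ j : Fin n, v j) := by
  classical
  obtain ⟨m, rfl⟩ : ∃ m, n = m + 1 := ⟨n - 1, by omega⟩
  set a : Polynomial Λ := C (algebraMap R Λ f0) with ha_def
  set a1 : Polynomial Λ := C (algebraMap R Λ f1) * X with ha1_def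
  set L : List (Fin (m + 1)) := List.finRange (m + 1) with hL_def
  have ha1C : ∀ x : Λ, Commute a1 (C x) := fun x =>
    ((C_alg_commute' f1 (C x))).mul_left (Polynomial.commute_X (C x))
  have hfac : ∀ x y : Λ, a1 * C x * C y = a1 * C (x * y) := fun x y => by
    rw [mul_assoc, ← C_mul]
  have hprod : ∀ w1 w2 : Λ, (a1 * C w1) * (a1 * C w2) = a1 * a1 * C (w1 * w2) := by
    intro w1 w2
    rw [mul_assoc a1 (C w1), ← mul_assoc (C w1), ← (ha1C w1).eq,
      mul_assoc a1 (C w1), ← C_mul, ← mul_assoc]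
  have hkey : ∀ i j aa bb : Fin (m + 1),
      a1 * C (u i) * C (v aa) * (a1 * C (u j) * C (v bb))
      + a1 * C (u i) * C (v bb) * (a1 * C (u j) * C (v aa)) = 0 := by
    intro i j aa bb
    have h1 : v aa * u j = -(u j * v aa) := by rw [huv j aa, neg_neg]
    have h2 : v bb * u j = -(u j * v bb) := by rw [huv j bb, neg_neg]
    have h3 : v bb * v aa = -(v aa * v bb) := hv bb aa
    rw [hfac (u i) (v aa), hfac (u j) (v bb), hfac (u i) (v bb), hfac (u j) (v aa),
      hprod, hprod, ← mul_add, ← C_add, keyB (u i) (u j) (v aa) (v bb) h1 h2 h3,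
      map_zero, mul_zero]
  set c : List (Fin (m + 1)) → Polynomial Λ := fun s =>
    ∑ σ : Equiv.Perm (Fin (m + 1)),
      a ^ (L.length - s.length) * (s.map (fun k => a1 * C (u k) * C (v (σ k)))).prod
    with hc_def
  have step1 : (∑ σ : Equiv.Perm (Fin (m + 1)),
      (L.map (fun i => a + a1 * C (u i) * C (v (σ i)))).prod)
      = (L.sublists'.map c).sum := by
    calc (∑ σ : Equiv.Perm (Fin (m + 1)),
        (L.map (fun i => a + a1 * C (u i) * C (v (σ i)))).prod)
        = ∑ σ : Equiv.Perm (Fin (m + 1)), (L.sublists'.map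
            (fun s => a ^ (L.length - s.length)
              * (s.map (fun k => a1 * C (u k) * C (v (σ k)))).prod)).sum :=
          Finset.sum_congr rfl (fun σ _ =>
            expand_lemma a (fun k => a1 * C (u k) * C (v (σ k)))
              (fun k => C_alg_commute' f0 _) L)
      _ = _ := list_sum_comm _ _ _
  have hvanish : ∀ s : List (Fin (m + 1)), s.Sublist L → 2 ≤ s.length → c s = 0 := by
    intro s hs h2
    match s, h2 with
    | i :: j :: rest, _ =>
      have hnd : (i :: j :: rest).Nodup := hs.nodup (List.nodup_finRange (m + 1))
      have hij : i ≠ j := by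
        intro h; exact (List.nodup_cons.mp hnd).1 (h ▸ List.mem_cons_self)
      have hrest : ∀ k ∈ rest, k ≠ i ∧ k ≠ j := by
        intro k hk
        constructor
        · intro h; exact (List.nodup_cons.mp hnd).1 (h ▸ List.mem_cons_of_mem _ hk)
        · intro h
          exact (List.nodup_cons.mp (List.nodup_cons.mp hnd).2).1 (h ▸ hk)
      show ∑ σ : Equiv.Perm (Fin (m + 1)), a ^ (L.length - (i :: j :: rest).length)
          * ((i :: j :: rest).map (fun k => a1 * C (u k) * C (v (σ k)))).prod = 0
      rw [← Finset.mul_sum]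
      exact mul_eq_zero_of_right _
        (vanish (fun k mm => a1 * C (u k) * C (v mm))
          (fun i j aa bb => hkey i j aa bb) i j rest hij hrest)
  rw [step1, sum_sublists' L c (List.nodup_finRange (m + 1)) hvanish]
  have hc0 : c [] = (((m + 1) : ℕ).factorial : Polynomial Λ)
      * C (algebraMap R Λ (f0 ^ (m + 1))) := by
    show (∑ _σ : Equiv.Perm (Fin (m + 1)), a ^ (L.length - ([] : List (Fin (m + 1))).length)
      * (([] : List (Fin (m + 1))).map _).prod) = _
    simp only [List.length_nil, Nat.sub_zero, List.map_nil, List.prod_nil, mul_one,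
      hL_def, List.length_finRange]
    rw [Finset.sum_const, Finset.card_univ, Fintype.card_perm, Fintype.card_fin,
      nsmul_eq_mul]
    congr 1
    rw [ha_def, ← map_pow, ← map_pow]
  have hc1 : ∀ i : Fin (m + 1), c [i]
      = m.factorial • (a ^ m * a1 * C (u i) * C (∑ j, v j)) := by
    intro i
    show (∑ σ : Equiv.Perm (Fin (m + 1)), a ^ (L.length - ([i] : List (Fin (m + 1))).length)
      * (([i].map (fun k => a1 * C (u k) * C (v (σ k))))).prod) = _
    simp only [List.length_cons, List.length_nil, List.map_cons, List.map_nil,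
      List.prod_cons, List.prod_nil, mul_one, hL_def, List.length_finRange,
      Nat.add_sub_cancel]
    have hterm : ∀ σ : Equiv.Perm (Fin (m + 1)),
        a ^ m * (a1 * C (u i) * C (v (σ i))) = a ^ m * a1 * C (u i) * C (v (σ i)) := by
      intro σ; rw [← mul_assoc, ← mul_assoc]
    calc ∑ σ : Equiv.Perm (Fin (m + 1)), a ^ m * (a1 * C (u i) * C (v (σ i)))
        = ∑ σ : Equiv.Perm (Fin (m + 1)), a ^ m * a1 * C (u i) * C (v (σ i)) :=
          Finset.sum_congr rfl (fun σ _ => hterm σ)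
      _ = a ^ m * a1 * C (u i) * C (∑ σ : Equiv.Perm (Fin (m + 1)), v (σ i)) := by
          rw [← Finset.mul_sum, map_sum]
      _ = _ := by
          rw [sum_perm_apply m v i, map_nsmul, mul_smul_comm]
  rw [hc0]
  have hLsum : (L.map (fun i => c [i])).sum = ∑ i : Fin (m + 1), c [i] :=
    (Fin.sum_univ_def (fun i => c [i])).symm
  rw [hLsum]
  congr 1
  have hsum : ∑ i : Fin (m + 1), a ^ m * a1 * C (u i) * C (∑ j, v j)
      = a ^ m * a1 * C (∑ i, u i) * C (∑ j, v j) := by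
    rw [← Finset.sum_mul, ← Finset.mul_sum, ← map_sum]
  have ha1' : a ^ m * a1 = C (algebraMap R Λ (f0 ^ m * f1)) * X := by
    rw [ha_def, ha1_def, map_mul, map_mul, map_pow, map_pow, mul_assoc]
  calc ∑ i : Fin (m + 1), c [i]
      = ∑ i : Fin (m + 1), m.factorial • (a ^ m * a1 * C (u i) * C (∑ j, v j)) :=
        Finset.sum_congr rfl (fun i _ => hc1 i)
    _ = m.factorial • (a ^ m * a1 * C (∑ i, u i) * C (∑ j, v j)) := by
        rw [← Finset.smul_sum, hsum]
    _ = _ := by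
        rw [ha1', nsmul_eq_mul]
        have hmm : m + 1 - 1 = m := rfl
        rw [hmm]
        noncomm_ring
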